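/- Let f be a homogeneous polynomial of degree m in d variables and let Σ be a d×d real matrix. Then ‖v(f(ΣX))‖ ≤ ‖Σ‖_op^m · ‖v(f(X))‖, where f(ΣX) denotes the polynomial obtained by substituting the linear transformation Σ applied to the variables. -/

import Mathlib

open MvPolynomial

/-- The exponent (monomial) associated to an index tuple `w : Fin k → Fin d`. -/
noncomputable def expOf {d k : ℕ} (w : Fin k → Fin d) : Fin d →₀ ℕ := ∑ i, Finsupp.single (w i) 1

/-- The number of index tuples giving the same monomial as `w`. -/
noncomputable def countOf {d k : ℕ} (w : Fin k → Fin d) : ℕ :=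
  Nat.card {w' : Fin k → Fin d // expOf w' = expOf w}

/-- Entry of the flattened symmetric coefficient tensor of a homogeneous degree-`k`
polynomial `f`: the coefficient of the corresponding monomial divided evenly among
all index tuples producing it.  This is the unique symmetric tensor `T(f)` with
`⟨T(f), X^{⊗k}⟩ = f(X)`, flattened into a vector indexed by `Fin k → Fin d`. -/
noncomputable def coeffVecEntry {d : ℕ} (k : ℕ) (f : MvPolynomial (Fin d) ℝ)
    (w : Fin k → Fin d) : ℝ :=
  f.coeff (expOf w) / (countOf w)

/-- Euclidean norm `‖v(f)‖` of the flattened symmetric coefficient tensor of `f`,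
viewed as a homogeneous polynomial of degree `k`. -/
noncomputable def vnorm {d : ℕ} (k : ℕ) (f : MvPolynomial (Fin d) ℝ) : ℝ :=
  Real.sqrt (∑ w : Fin k → Fin d, (coeffVecEntry k f w)^2)

/-- Operator (spectral) norm of a real matrix, via its action on Euclidean space. -/
noncomputable def specNorm {d : ℕ} (M : Matrix (Fin d) (Fin d) ℝ) : ℝ :=
  ‖Matrix.toEuclideanCLM (𝕜 := ℝ) M‖


lemma eucl_norm_sq {d : ℕ} (z : EuclideanSpace ℝ (Fin d)) : ‖z‖^2 = ∑ i, (z i)^2 := by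
  rw [EuclideanSpace.norm_eq, Real.sq_sqrt (by positivity)]
  simp [sq_abs]

set_option synthInstance.maxHeartbeats 1000000 in
lemma specNorm_transpose {d : ℕ} (M : Matrix (Fin d) (Fin d) ℝ) :
    ‖Matrix.toEuclideanCLM (𝕜 := ℝ) M.transpose‖ = ‖Matrix.toEuclideanCLM (𝕜 := ℝ) M‖ := by
  have h : M.transpose = star M := by ext i j; simp [Matrix.conjTranspose_apply]
  rw [h, map_star, ContinuousLinearMap.star_eq_adjoint, ContinuousLinearMap.adjoint.norm_map]

lemma mat_bound {d : ℕ} (M : Matrix (Fin d) (Fin d) ℝ) (x : Fin d → ℝ) :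
    ∑ a, (∑ b, M b a * x b)^2 ≤ ‖Matrix.toEuclideanCLM (𝕜 := ℝ) M‖^2 * ∑ b, (x b)^2 := by
  set y : EuclideanSpace ℝ (Fin d) := (WithLp.equiv 2 _).symm x with hy
  have h := (Matrix.toEuclideanCLM (𝕜 := ℝ) M.transpose).le_opNorm y
  have h2 := mul_self_le_mul_self (norm_nonneg _) h
  rw [← pow_two, ← pow_two, mul_pow, specNorm_transpose] at h2
  calc ∑ a, (∑ b, M b a * x b)^2
      = ‖Matrix.toEuclideanCLM (𝕜 := ℝ) M.transpose y‖^2 := by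
        rw [eucl_norm_sq]
        apply Finset.sum_congr rfl
        intro a _
        simp [hy, Matrix.mulVec, dotProduct, Matrix.transpose_apply]
    _ ≤ ‖Matrix.toEuclideanCLM (𝕜 := ℝ) M‖^2 * ‖y‖^2 := h2
    _ = _ := by rw [eucl_norm_sq]; rfl


lemma key {d : ℕ} (M : Matrix (Fin d) (Fin d) ℝ) : ∀ (m : ℕ) (u : (Fin m → Fin d) → ℝ),
    ∑ w' : Fin m → Fin d, (∑ w : Fin m → Fin d, u w * ∏ i, M (w i) (w' i))^2
      ≤ (‖Matrix.toEuclideanCLM (𝕜 := ℝ) M‖^2)^m * ∑ w, (u w)^2 := by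
  intro m
  induction m with
  | zero =>
    intro u
    simp only [Finset.univ_unique, Finset.sum_singleton, Fin.prod_univ_zero, mul_one,
      pow_zero, one_mul]
    exact le_refl _
  | succ m ih =>
    intro u
    set N := ‖Matrix.toEuclideanCLM (𝕜 := ℝ) M‖^2 with hN
    set cns : Fin d → (Fin m → Fin d) → (Fin (m+1) → Fin d) :=
      fun b r => Fin.cons (α := fun _ => Fin d) b r with hcns
    have hsum : ∀ (F : (Fin (m+1) → Fin d) → ℝ),
        ∑ w, F w = ∑ b, ∑ r : Fin m → Fin d, F (cns b r) := by
      intro F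
      rw [← Equiv.sum_comp (Fin.consEquiv (fun _ => Fin d)) F, Fintype.sum_prod_type]
      rfl
    set T : Fin d → (Fin m → Fin d) → ℝ :=
      fun b r' => ∑ r : Fin m → Fin d, u (cns b r) * ∏ i, M (r i) (r' i) with hT
    have hS : ∀ (a : Fin d) (r' : Fin m → Fin d),
        (∑ w : Fin (m+1) → Fin d, u w * ∏ i, M (w i) (cns a r' i))
          = ∑ b, M b a * T b r' := by
      intro a r'
      rw [hsum (fun w => u w * ∏ i, M (w i) (cns a r' i))]
      apply Finset.sum_congr rfl
      intro b _
      rw [hT, Finset.mul_sum]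
      apply Finset.sum_congr rfl
      intro r _
      rw [Fin.prod_univ_succ]
      simp only [hcns, Fin.cons_zero, Fin.cons_succ]
      ring
    calc ∑ w' : Fin (m+1) → Fin d, (∑ w : Fin (m+1) → Fin d, u w * ∏ i, M (w i) (w' i))^2
        = ∑ a, ∑ r' : Fin m → Fin d, (∑ b, M b a * T b r')^2 := by
          rw [hsum (fun w' => (∑ w : Fin (m+1) → Fin d, u w * ∏ i, M (w i) (w' i))^2)]
          exact Finset.sum_congr rfl fun a _ => Finset.sum_congr rfl fun r' _ => by rw [hS]
      _ = ∑ r' : Fin m → Fin d, ∑ a, (∑ b, M b a * T b r')^2 := Finset.sum_comm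
      _ ≤ ∑ r' : Fin m → Fin d, (N * ∑ b, (T b r')^2) := by
          apply Finset.sum_le_sum
          intro r' _
          exact mat_bound M (fun b => T b r')
      _ = N * ∑ b, ∑ r' : Fin m → Fin d, (T b r')^2 := by
          rw [← Finset.mul_sum, Finset.sum_comm]
      _ ≤ N * ∑ b, (N^m * ∑ r : Fin m → Fin d, (u (cns b r))^2) := by
          apply mul_le_mul_of_nonneg_left _ (by positivity)
          apply Finset.sum_le_sum
          intro b _
          exact ih (fun r => u (cns b r))
      _ = N^(m+1) * ∑ w, (u w)^2 := by
          rw [hsum (fun w => (u w)^2), ← Finset.mul_sum]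
          ring



lemma expOf_apply {d k : ℕ} (w : Fin k → Fin d) (j : Fin d) :
    expOf w j = (Finset.univ.filter fun i => w i = j).card := by
  classical
  rw [expOf, Finsupp.finset_sum_apply]
  rw [Finset.card_filter]
  apply Finset.sum_congr rfl
  intro i _
  rw [Finsupp.single_apply]

lemma expOf_comp {d k : ℕ} (w : Fin k → Fin d) (σ : Equiv.Perm (Fin k)) :
    expOf (w ∘ σ) = expOf w := by
  rw [expOf, expOf, ← Equiv.sum_comp σ (fun i => Finsupp.single (w i) 1)]
  rfl

lemma exists_perm_of_expOf_eq {d k : ℕ} {w w' : Fin k → Fin d} (h : expOf w' = expOf w) :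
    ∃ σ : Equiv.Perm (Fin k), w' = w ∘ σ := by
  classical
  have hcard : ∀ j, Fintype.card {i // w' i = j} = Fintype.card {i // w i = j} := by
    intro j
    have h1 := expOf_apply w j
    have h2 := expOf_apply w' j
    rw [h] at h2
    rw [Fintype.card_subtype, Fintype.card_subtype, ← h1, ← h2]
  have hfib : ∀ j, {i // w' i = j} ≃ {i // w i = j} :=
    fun j => Fintype.equivOfCardEq (hcard j)
  refine ⟨Equiv.ofFiberEquiv hfib, ?_⟩
  funext i
  exact (Equiv.ofFiberEquiv_map hfib i).symm

lemma countOf_eq {d k : ℕ} (w : Fin k → Fin d) :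
    countOf w = (Finset.univ.filter fun w' : Fin k → Fin d => expOf w' = expOf w).card := by
  classical
  rw [countOf, Nat.card_eq_fintype_card, Fintype.card_subtype]

lemma countOf_pos {d k : ℕ} (w : Fin k → Fin d) : 0 < countOf w := by
  classical
  rw [countOf_eq]
  apply Finset.card_pos.mpr
  exact ⟨w, by simp⟩


lemma list_sum_single {d : ℕ} (l : List (Fin d)) :
    (l.map (fun a => Finsupp.single a (1:ℕ))).sum = Multiset.toFinsupp (l : Multiset (Fin d)) := by
  induction l with
  | nil => simp
  | cons a l ih =>
    rw [List.map_cons, List.sum_cons, ih]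
    ext j
    classical
    simp [Multiset.toFinsupp_apply, Finsupp.single_apply, List.count_cons]
    by_cases h : a = j <;> simp [h, add_comm]

lemma sum_single_get {d : ℕ} (l : List (Fin d)) :
    (∑ i : Fin l.length, Finsupp.single (l.get i) 1) = Multiset.toFinsupp (l : Multiset (Fin d)) := by
  rw [← list_sum_single]
  exact Fin.sum_univ_fun_getElem l (fun a => Finsupp.single a 1)

lemma exists_expOf {d m : ℕ} (e : Fin d →₀ ℕ) (h : e.degree = m) :
    ∃ w : Fin m → Fin d, expOf w = e := by
  classical
  have hcard : (Finsupp.toMultiset e).card = m := by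
    rw [Finsupp.card_toMultiset, ← h]
    rfl
  set l := (Finsupp.toMultiset e).toList with hl
  have hlen : l.length = m := by rw [hl, Multiset.length_toList, hcard]
  refine ⟨fun i => l.get (Fin.cast hlen.symm i), ?_⟩
  rw [expOf]
  have h2 := Equiv.sum_comp (finCongr hlen.symm)
    (fun k : Fin l.length => Finsupp.single (l.get k) (1:ℕ))
  simp only [finCongr_apply] at h2
  rw [h2, sum_single_get, hl, Multiset.coe_toList, Finsupp.toMultiset_toFinsupp]

lemma prod_X_eq_monomial {d k : ℕ} (w : Fin k → Fin d) :
    (∏ i, (X (w i) : MvPolynomial (Fin d) ℝ)) = monomial (expOf w) 1 := by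
  classical
  rw [expOf]
  induction (Finset.univ : Finset (Fin k)) using Finset.induction_on with
  | empty => simp
  | insert a s h ih =>
    rw [Finset.prod_insert h, Finset.sum_insert h, ih, X, monomial_mul, one_mul]

lemma decomp {d m : ℕ} (f : MvPolynomial (Fin d) ℝ) (hf : f.IsHomogeneous m) :
    f = ∑ w : Fin m → Fin d, (monomial (expOf w)) (coeffVecEntry m f w) := by
  classical
  set G : (Fin d →₀ ℕ) → MvPolynomial (Fin d) ℝ := fun e =>
    monomial e (f.coeff e /
      ((Finset.univ.filter fun w' : Fin m → Fin d => expOf w' = e).card : ℝ)) with hG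
  have h1 : ∀ w : Fin m → Fin d, (monomial (expOf w)) (coeffVecEntry m f w) = G (expOf w) := by
    intro w
    rw [hG, coeffVecEntry, countOf_eq]
  rw [Finset.sum_congr rfl fun w _ => h1 w, Finset.sum_comp]
  have h2 : ∀ e ∈ Finset.univ.image (expOf : (Fin m → Fin d) → _),
      (Finset.univ.filter fun w : Fin m → Fin d => expOf w = e).card • G e
        = monomial e (f.coeff e) := by
    intro e he
    obtain ⟨w, _, hw⟩ := Finset.mem_image.mp he
    have hpos : 0 < (Finset.univ.filter fun w' : Fin m → Fin d => expOf w' = e).card :=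
      Finset.card_pos.mpr ⟨w, by simpa using hw⟩
    have hne : ((Finset.univ.filter fun w' : Fin m → Fin d => expOf w' = e).card : ℝ) ≠ 0 :=
      Nat.cast_ne_zero.mpr hpos.ne'
    rw [hG, ← map_nsmul]
    congr 1
    rw [nsmul_eq_mul, mul_comm, div_mul_cancel₀ _ hne]
  rw [Finset.sum_congr rfl h2]
  have hsub : f.support ⊆ Finset.univ.image (expOf : (Fin m → Fin d) → _) := by
    intro e he
    have hdeg : e.degree = m := by
      by_contra hne
      exact (mem_support_iff.mp he) (hf.coeff_eq_zero hne)
    obtain ⟨w, hw⟩ := exists_expOf e hdeg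
    exact Finset.mem_image.mpr ⟨w, Finset.mem_univ w, hw⟩
  calc f = ∑ e ∈ f.support, monomial e (f.coeff e) :=
        (MvPolynomial.support_sum_monomial_coeff f).symm
    _ = ∑ e ∈ Finset.univ.image (expOf : (Fin m → Fin d) → _), monomial e (f.coeff e) :=
        Finset.sum_subset hsub (fun e _ he => by rw [notMem_support_iff.mp he, map_zero])

lemma S_invariant {d m : ℕ} (f : MvPolynomial (Fin d) ℝ) (M : Matrix (Fin d) (Fin d) ℝ)
    {w' w0 : Fin m → Fin d} (h : expOf w' = expOf w0) :
    (∑ w : Fin m → Fin d, coeffVecEntry m f w * ∏ i, M (w i) (w' i))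
      = ∑ w : Fin m → Fin d, coeffVecEntry m f w * ∏ i, M (w i) (w0 i) := by
  obtain ⟨σ, rfl⟩ := exists_perm_of_expOf_eq h
  set e : (Fin m → Fin d) ≃ (Fin m → Fin d) := Equiv.arrowCongr σ.symm (Equiv.refl (Fin d)) with he
  have := Equiv.sum_comp e (fun w => coeffVecEntry m f w * ∏ i, M (w i) ((w0 ∘ σ) i))
  rw [← this]
  apply Finset.sum_congr rfl
  intro w _
  have h1 : e w = w ∘ σ := rfl
  rw [h1]
  have h2 : coeffVecEntry m f (w ∘ σ) = coeffVecEntry m f w := by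
    rw [coeffVecEntry, coeffVecEntry, countOf, countOf, expOf_comp]
  rw [h2]
  congr 1
  exact Equiv.prod_comp σ (fun i => M (w i) (w0 i))

lemma coeff_aeval_eq {d m : ℕ} (f : MvPolynomial (Fin d) ℝ) (hf : f.IsHomogeneous m)
    (M : Matrix (Fin d) (Fin d) ℝ) (w0 : Fin m → Fin d) :
    coeffVecEntry m (MvPolynomial.aeval
        (fun i => ∑ j, MvPolynomial.C (M i j) * MvPolynomial.X j) f) w0
      = ∑ w : Fin m → Fin d, coeffVecEntry m f w * ∏ i, M (w i) (w0 i) := by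
  classical
  set φ : Fin d → MvPolynomial (Fin d) ℝ := fun i => ∑ j, MvPolynomial.C (M i j) * X j with hφ
  set c : (Fin m → Fin d) → ℝ := coeffVecEntry m f with hc
  set S : (Fin m → Fin d) → ℝ := fun w' => ∑ w, c w * ∏ i, M (w i) (w' i) with hS
  have hg : aeval φ f = ∑ w' : Fin m → Fin d, monomial (expOf w') (S w') := by
    conv_lhs => rw [decomp f hf]
    rw [map_sum]
    have hterm : ∀ w : Fin m → Fin d,
        aeval φ (monomial (expOf w) (c w))
          = ∑ w' : Fin m → Fin d, monomial (expOf w') (c w * ∏ i, M (w i) (w' i)) := by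
      intro w
      have hmono : (monomial (expOf w)) (c w) = C (c w) * ∏ i, (X (w i) : MvPolynomial (Fin d) ℝ) := by
        rw [prod_X_eq_monomial, C_mul_monomial, mul_one]
      rw [hmono, map_mul, aeval_C, map_prod]
      have hprod : (∏ i, aeval φ (X (w i) : MvPolynomial (Fin d) ℝ))
          = ∑ w' : Fin m → Fin d, monomial (expOf w') (∏ i, M (w i) (w' i)) := by
        simp only [aeval_X, hφ]
        rw [Finset.prod_univ_sum]
        apply Finset.sum_congr rfl
        intro w' _
        rw [Finset.prod_mul_distrib, prod_X_eq_monomial,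
          ← map_prod (C : ℝ →+* MvPolynomial (Fin d) ℝ) (fun x => M (w x) (w' x)) Finset.univ,
          C_mul_monomial, mul_one]
      rw [hprod, Finset.mul_sum]
      apply Finset.sum_congr rfl
      intro w' _
      rw [algebraMap_eq, C_mul_monomial]
    rw [Finset.sum_congr rfl fun w _ => hterm w, Finset.sum_comm]
    apply Finset.sum_congr rfl
    intro w' _
    rw [← map_sum]
  rw [coeffVecEntry, hg]
  have hcoeff : coeff (expOf w0) (∑ w' : Fin m → Fin d, monomial (expOf w') (S w'))
      = (countOf w0) * S w0 := by
    rw [MvPolynomial.coeff_sum]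
    have : ∀ w' : Fin m → Fin d, coeff (expOf w0) (monomial (expOf w') (S w'))
        = if expOf w' = expOf w0 then S w0 else 0 := by
      intro w'
      rw [coeff_monomial]
      by_cases h : expOf w' = expOf w0
      · rw [if_pos h, if_pos h]
        exact S_invariant f M h
      · rw [if_neg h, if_neg h]
    rw [Finset.sum_congr rfl fun w' _ => this w', ← Finset.sum_filter]
    rw [Finset.sum_const, nsmul_eq_mul, countOf_eq]
  rw [hcoeff, mul_comm, mul_div_assoc, div_self, mul_one]
  exact Nat.cast_ne_zero.mpr (countOf_pos w0).ne'

/-- For a homogeneous degree-`m` polynomial `f` and a matrix `Σ`: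
`‖v(f(ΣX))‖ ≤ ‖Σ‖_op^m · ‖v(f)‖`, where `f(ΣX)` substitutes `X ↦ ΣX`. -/
theorem vnorm_linear_transform {d m : ℕ} (f : MvPolynomial (Fin d) ℝ)
    (hf : f.IsHomogeneous m) (M : Matrix (Fin d) (Fin d) ℝ) :
    vnorm m (MvPolynomial.aeval
        (fun i => ∑ j, MvPolynomial.C (M i j) * MvPolynomial.X j) f)
      ≤ specNorm M ^ m * vnorm m f := by
  classical
  have hco : ∀ w0 : Fin m → Fin d,
      coeffVecEntry m (MvPolynomial.aeval
        (fun i => ∑ j, MvPolynomial.C (M i j) * MvPolynomial.X j) f) w0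
        = ∑ w : Fin m → Fin d, coeffVecEntry m f w * ∏ i, M (w i) (w0 i) :=
    coeff_aeval_eq f hf M
  rw [vnorm, vnorm]
  rw [Finset.sum_congr rfl fun w0 _ => by rw [hco w0]]
  have hk := key M m (coeffVecEntry m f)
  set N := ‖Matrix.toEuclideanCLM (𝕜 := ℝ) M‖ with hNdef
  have hN : (0:ℝ) ≤ N := norm_nonneg _
  have hspec : specNorm M = N := rfl
  calc Real.sqrt (∑ w0 : Fin m → Fin d,
        (∑ w : Fin m → Fin d, coeffVecEntry m f w * ∏ i, M (w i) (w0 i))^2)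
      ≤ Real.sqrt ((N^2)^m * ∑ w : Fin m → Fin d, (coeffVecEntry m f w)^2) :=
        Real.sqrt_le_sqrt hk
    _ = N^m * Real.sqrt (∑ w : Fin m → Fin d, (coeffVecEntry m f w)^2) := by
        rw [Real.sqrt_mul (by positivity), ← pow_mul, mul_comm 2 m, pow_mul,
          Real.sqrt_sq (pow_nonneg hN m)]
    _ = specNorm M ^ m * Real.sqrt (∑ w : Fin m → Fin d, (coeffVecEntry m f w)^2) := by
        rw [hspec]
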